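/- arXiv:2603.09059 — 2 statements merged into one kernel-verified Lean document; each statement's English description precedes it below -/
import Mathlib

section
/- Let l1, l2, l3 be positive integers with 1 ≤ l1 ≤ l2 ≤ l3, and let n = l1 + l2 + l3 - 1. The quadratic polynomial 1 + (n-1)q + (C(n,2) - C(l1,2) - C(l2,2) - C(l3,2))q^2 has all real roots if and only if l1 ≤ l2 + l3 - 2√(l2 l3). -/
lemma two_mul_choose_two (m : ℕ) : 2 * m.choose 2 = m * (m - 1) := by
  rcases m with _ | k
  · simp
  · rw [Nat.choose_two_right]
    simp only [Nat.succ_sub_one]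
    rw [Nat.mul_div_cancel']
    simpa [mul_comm] using (Nat.even_mul_succ_self k).two_dvd

lemma quad_root_real_iff (a b : ℝ) (ha : 0 < a) :
    (∀ z : ℂ, 1 + (b : ℂ) * z + (a : ℂ) * z ^ 2 = 0 → z.im = 0) ↔ 4 * a ≤ b ^ 2 := by
  constructor
  · intro h
    by_contra hlt
    push_neg at hlt
    set s := Real.sqrt (4 * a - b ^ 2) with hs_def
    have hs : 0 < s := Real.sqrt_pos.mpr (by linarith)
    have hs2 : s ^ 2 = 4 * a - b ^ 2 := Real.sq_sqrt (by linarith)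
    set w : ℂ := ((-b / (2 * a) : ℝ) : ℂ) + ((s / (2 * a) : ℝ) : ℂ) * Complex.I with hw_def
    have ha' : (a : ℂ) ≠ 0 := by exact_mod_cast ha.ne'
    have hs2' : ((s : ℂ)) ^ 2 = 4 * (a : ℂ) - (b : ℂ) ^ 2 := by
      have := congrArg (Complex.ofReal) hs2
      push_cast at this
      exact this
    have hw : 1 + (b : ℂ) * w + (a : ℂ) * w ^ 2 = 0 := by
      rw [hw_def]
      push_cast
      field_simp
      linear_combination (-1) * hs2' + (s:ℂ)^2 * Complex.I_sq
    have him := h w hw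
    have hwim : w.im = s / (2 * a) := by
      rw [hw_def]
      simp only [Complex.add_im, Complex.ofReal_im, Complex.mul_im, Complex.ofReal_re,
        Complex.I_im, Complex.I_re, mul_one, mul_zero, zero_add, add_zero, zero_mul]
    rw [hwim] at him
    have : 0 < s / (2 * a) := div_pos hs (by linarith)
    linarith
  · intro hge z hz
    set r := Real.sqrt (b ^ 2 - 4 * a) with hr_def
    have hr2 : ((r : ℂ)) ^ 2 = (b : ℂ) ^ 2 - 4 * (a : ℂ) := by
      have := congrArg (Complex.ofReal) (Real.sq_sqrt (by linarith : (0:ℝ) ≤ b ^ 2 - 4 * a))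
      push_cast at this
      exact this
    have key : ((2 * (a:ℂ) * z + b) - r) * ((2 * (a:ℂ) * z + b) + r) = 0 := by
      linear_combination 4 * (a : ℂ) * hz - hr2
    have ha2 : (2 * (a : ℂ)) ≠ 0 := by
      simp only [ne_eq, mul_eq_zero]
      push_neg
      exact ⟨two_ne_zero, by exact_mod_cast ha.ne'⟩
    rcases mul_eq_zero.mp key with h' | h'
    · have hz' : z = (((r - b) / (2 * a) : ℝ) : ℂ) := by
        push_cast
        field_simp
        rw [eq_div_iff (by exact_mod_cast ha.ne' : (a:ℂ) ≠ 0)]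
        linear_combination h'
      rw [hz']
      exact Complex.ofReal_im _
    · have hz' : z = (((-r - b) / (2 * a) : ℝ) : ℂ) := by
        push_cast
        field_simp
        rw [eq_div_iff (by exact_mod_cast ha.ne' : (a:ℂ) ≠ 0)]
        linear_combination h'
      rw [hz']
      exact Complex.ofReal_im _

/-- For the Θ-graph with path lengths `1 ≤ l1 ≤ l2 ≤ l3` and `n = l1+l2+l3-1`,
the quadratic `1 + (n-1) q + (C(n,2) - C(l1,2) - C(l2,2) - C(l3,2)) q²` has all
real roots iff `l1 ≤ l2 + l3 - 2√(l2 l3)`. -/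
theorem theta_graph_real_rooted_iff (l1 l2 l3 n : ℕ)
    (h1 : 1 ≤ l1) (h12 : l1 ≤ l2) (h23 : l2 ≤ l3)
    (hn : n = l1 + l2 + l3 - 1) :
    (∀ z : ℂ, 1 + ((n : ℂ) - 1) * z +
        (((n.choose 2 : ℤ) - l1.choose 2 - l2.choose 2 - l3.choose 2 : ℤ) : ℂ) * z ^ 2 = 0 →
        z.im = 0) ↔
      (l1 : ℝ) ≤ (l2 : ℝ) + l3 - 2 * Real.sqrt (l2 * l3) := by
  have hr1 : (1:ℝ) ≤ (l1:ℝ) := by exact_mod_cast h1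
  have hr12 : (l1:ℝ) ≤ (l2:ℝ) := by exact_mod_cast h12
  have hr23 : (l2:ℝ) ≤ (l3:ℝ) := by exact_mod_cast h23
  set A : ℝ := (l1:ℝ)*l2 + (l1:ℝ)*l3 + (l2:ℝ)*l3 - ((l1:ℝ)+l2+l3) + 1 with hA_def
  set B : ℝ := (l1:ℝ)+(l2:ℝ)+(l3:ℝ) - 2 with hB_def
  have hAp : 0 < A := by
    rw [hA_def]
    nlinarith [mul_nonneg (by linarith : (0:ℝ) ≤ (l1:ℝ)-1) (by linarith : (0:ℝ) ≤ (l2:ℝ)-1),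
      mul_le_mul_of_nonneg_left (by linarith : (1:ℝ) ≤ (l1:ℝ)+(l2:ℝ)-1) (by linarith : (0:ℝ) ≤ (l3:ℝ))]
  -- integer identity for the quadratic coefficient
  have hnz : (n:ℤ) = (l1:ℤ) + l2 + l3 - 1 := by
    rw [hn, Nat.cast_sub (by omega : 1 ≤ l1 + l2 + l3)]
    push_cast; ring
  have cast_choose : ∀ m : ℕ, 1 ≤ m → (2:ℤ) * (m.choose 2 : ℤ) = (m:ℤ) * ((m:ℤ) - 1) := by
    intro m hm
    have := congrArg (fun k : ℕ => (k : ℤ)) (two_mul_choose_two m)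
    push_cast [Nat.cast_sub hm] at this
    exact this
  have c0 := cast_choose n (by omega)
  have c1 := cast_choose l1 h1
  have c2 := cast_choose l2 (le_trans h1 h12)
  have c3 := cast_choose l3 (le_trans h1 (le_trans h12 h23))
  rw [hnz] at c0
  have hAZ : ((n.choose 2 : ℤ) - l1.choose 2 - l2.choose 2 - l3.choose 2)
      = (l1:ℤ)*l2 + (l1:ℤ)*l3 + (l2:ℤ)*l3 - ((l1:ℤ)+l2+l3) + 1 := by
    have h2 : (2:ℤ) * ((n.choose 2 : ℤ) - l1.choose 2 - l2.choose 2 - l3.choose 2)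
        = 2 * ((l1:ℤ)*l2 + (l1:ℤ)*l3 + (l2:ℤ)*l3 - ((l1:ℤ)+l2+l3) + 1) := by
      linear_combination c0 - c1 - c2 - c3
    linarith
  have hAc : (((n.choose 2 : ℤ) - l1.choose 2 - l2.choose 2 - l3.choose 2 : ℤ) : ℂ)
      = ((A : ℝ) : ℂ) := by
    rw [hAZ, hA_def]; push_cast; ring
  have hBc : ((n : ℂ) - 1) = ((B : ℝ) : ℂ) := by
    rw [hn, Nat.cast_sub (by omega : 1 ≤ l1 + l2 + l3), hB_def]
    push_cast; ring
  rw [hBc, hAc, quad_root_real_iff A B hAp]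
  -- now the purely real statement
  set u := Real.sqrt (l2:ℝ) with hu_def
  set v := Real.sqrt (l3:ℝ) with hv_def
  have hu2 : u ^ 2 = (l2:ℝ) := Real.sq_sqrt (by positivity)
  have hv2 : v ^ 2 = (l3:ℝ) := Real.sq_sqrt (by positivity)
  have hu1 : 1 ≤ u := by
    rw [hu_def, show (1:ℝ) = Real.sqrt 1 by simp]
    exact Real.sqrt_le_sqrt (by linarith)
  have hv1 : 1 ≤ v := by
    rw [hv_def, show (1:ℝ) = Real.sqrt 1 by simp]
    exact Real.sqrt_le_sqrt (by linarith)
  have huv : Real.sqrt ((l2:ℝ) * (l3:ℝ)) = u * v := Real.sqrt_mul (by positivity) _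
  have hprod : ((l1:ℝ) - ((l2:ℝ)+l3-2*(u*v))) * ((l1:ℝ) - ((l2:ℝ)+l3+2*(u*v)))
      = B^2 - 4*A := by
    rw [hA_def, hB_def]
    linear_combination (-4*v^2) * hu2 + (-4*(l2:ℝ)) * hv2
  have hneg : (l1:ℝ) - ((l2:ℝ)+l3+2*(u*v)) < 0 := by nlinarith
  rw [huv]
  constructor
  · intro hD
    by_contra hc
    push_neg at hc
    have h1' : 0 < (l1:ℝ) - ((l2:ℝ)+l3-2*(u*v)) := by linarith
    have := mul_neg_of_pos_of_neg h1' hneg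
    rw [hprod] at this
    linarith
  · intro hc
    have h1' : (l1:ℝ) - ((l2:ℝ)+l3-2*(u*v)) ≤ 0 := by linarith
    have h2' := mul_nonneg (neg_nonneg.mpr h1') (neg_nonneg.mpr hneg.le)
    rw [neg_mul_neg, hprod] at h2'
    linarith
end

section
/- Let d ≥ 2 and h(q) = 1 + (n-1)q + H_2 q^2 + ... + H_d q^d be a real polynomial with positive coefficients, where H_2 = C(m,2) - c_2 - (d-1)(n-1) - C(d,2), m = n + d - 1, and (2c_2 - n+1)m - 2c_2(n-1) < 0. Then h has a nonreal root. -/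
open Finset

section AuxNewton

variable {R : Type*} [CommRing R]

private lemma myEsymmOne (s : Multiset R) : s.esymm 1 = s.sum := by
  rw [Multiset.esymm, Multiset.powersetCard_one, Multiset.map_map]
  simp

private lemma myEsymmTwoCons (a : R) (s : Multiset R) :
    (a ::ₘ s).esymm 2 = s.esymm 2 + a * s.sum := by
  rw [Multiset.esymm, Multiset.powersetCard_cons, Multiset.map_add, Multiset.sum_add,
    Multiset.map_map]
  rw [Multiset.esymm]
  congr 1
  rw [Multiset.powersetCard_one, Multiset.map_map]
  simp only [Multiset.map_map, Function.comp, Multiset.prod_cons, Multiset.prod_singleton]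
  conv_rhs => rw [← Multiset.map_id' s]
  rw [← Multiset.sum_map_mul_left]

private lemma myIdentity (s : Multiset R) :
    s.sum ^ 2 = (s.map (· ^ 2)).sum + 2 * s.esymm 2 := by
  induction s using Multiset.induction with
  | empty => simp [Multiset.esymm, Multiset.powersetCard_eq_empty 2 (s := (0 : Multiset R)) (by simp)]
  | cons a s ih =>
    rw [Multiset.sum_cons, Multiset.map_cons, Multiset.sum_cons, myEsymmTwoCons]
    ring_nf
    ring_nf at ih
    linear_combination ih

private lemma myCS (s : Multiset ℝ) :
    s.sum ^ 2 ≤ (Multiset.card s : ℝ) * (s.map (· ^ 2)).sum := by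
  induction s using Multiset.induction with
  | empty => simp
  | cons a s ih =>
    have hT : (0:ℝ) ≤ (s.map (· ^ 2)).sum := Multiset.sum_nonneg (by
      intro x hx; obtain ⟨y, _, rfl⟩ := Multiset.mem_map.mp hx; positivity)
    have hc : (0:ℝ) ≤ (Multiset.card s : ℝ) := by positivity
    rw [Multiset.sum_cons, Multiset.map_cons, Multiset.sum_cons, Multiset.card_cons]
    push_cast
    rcases eq_or_ne s 0 with rfl | hne
    · simp
    · have hc1 : (1:ℝ) ≤ (Multiset.card s : ℝ) := by
        have := Multiset.card_pos.mpr hne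
        exact_mod_cast this
      have hY : (0:ℝ) ≤ (Multiset.card s : ℝ) * (s.map (· ^ 2)).sum - s.sum ^ 2 := by linarith
      have hcY : (0:ℝ) ≤ (Multiset.card s : ℝ) * ((Multiset.card s : ℝ) * (s.map (· ^ 2)).sum - s.sum ^ 2) :=
        mul_nonneg hc hY
      nlinarith [sq_nonneg ((Multiset.card s : ℝ) * a - s.sum), hY, hcY, hc1, hT]

private lemma myEsymmMap {S : Type*} [CommRing S] (f : R →+* S) (s : Multiset R) (k : ℕ) :
    (s.map f).esymm k = f (s.esymm k) := by
  rw [Multiset.esymm, Multiset.esymm, Multiset.powersetCard_map, Multiset.map_map,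
    map_multiset_sum, Multiset.map_map]
  congr 1
  apply Multiset.map_congr rfl
  intro t _
  simp [Multiset.prod_hom t f]

end AuxNewton

/-- If `h(q) = 1 + (n-1)q + H_2 q² + ⋯ + H_d q^d` has positive coefficients,
`H_2 = C(m,2) - c_2 - (d-1)(n-1) - C(d,2)` with `m = n + d - 1`, and
`(2c_2 - n + 1)m - 2c_2(n-1) < 0`, then `h` has a nonreal root. -/
theorem H_polynomial_nonreal_root (n m d : ℕ) (hn : 2 ≤ n) (hd : 2 ≤ d)
    (hmnd : m + 1 = n + d) (c2 : ℝ) (H : ℕ → ℝ)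
    (hpos : ∀ i ≤ d, 0 < H i)
    (hH0 : H 0 = 1) (hH1 : H 1 = (n : ℝ) - 1)
    (hH2 : H 2 = (m.choose 2 : ℝ) - c2 - ((d : ℝ) - 1) * ((n : ℝ) - 1) - (d.choose 2 : ℝ))
    (hineq : (2 * c2 - (n : ℝ) + 1) * m - 2 * c2 * ((n : ℝ) - 1) < 0) :
    ∃ z : ℂ, (∑ i ∈ Finset.range (d + 1), (H i : ℂ) * z ^ i) = 0 ∧ z.im ≠ 0 := by
  classical
  by_contra hcon
  push_neg at hcon
  -- `hcon : ∀ z, (∑ i ∈ range (d+1), H i * z ^ i) = 0 → z.im = 0`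
  -- the reversed polynomial
  set Q : Polynomial ℂ :=
    ∑ i ∈ Finset.range (d + 1), Polynomial.C ((H (d - i) : ℝ) : ℂ) * Polynomial.X ^ i with hQ
  have hne : ((H 0 : ℝ) : ℂ) ≠ 0 := by
    simpa using (hpos 0 (by omega)).ne'
  have hcoeff : ∀ k, Q.coeff k = if k ≤ d then ((H (d - k) : ℝ) : ℂ) else 0 := by
    intro k
    rw [hQ, Polynomial.finset_sum_coeff]
    simp only [Polynomial.coeff_C_mul, Polynomial.coeff_X_pow, mul_ite, mul_one, mul_zero]
    rw [Finset.sum_ite_eq (Finset.range (d + 1)) k]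
    simp [Finset.mem_range, Nat.lt_succ_iff]
  have hdegle : Q.natDegree ≤ d := by
    apply Polynomial.natDegree_sum_le_of_forall_le
    intro i hi
    exact (Polynomial.natDegree_C_mul_le _ _).trans
      (by simp [Finset.mem_range, Nat.lt_succ_iff] at hi ⊢; omega)
  have hcoeffd : Q.coeff d = ((H 0 : ℝ) : ℂ) := by rw [hcoeff]; simp
  have hdeg : Q.natDegree = d :=
    le_antisymm hdegle (Polynomial.le_natDegree_of_ne_zero (by rw [hcoeffd]; exact hne))
  have hlead : Q.leadingCoeff = ((H 0 : ℝ) : ℂ) := by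
    rw [Polynomial.leadingCoeff, hdeg, hcoeffd]
  have hroots : Multiset.card Q.roots = d := by
    rw [← hdeg]
    exact (Polynomial.splits_iff_card_roots).mp (IsAlgClosed.splits Q)
  -- evaluation formula
  have heval : ∀ z : ℂ, Q.eval z = ∑ i ∈ Finset.range (d + 1), ((H (d - i) : ℝ) : ℂ) * z ^ i := by
    intro z
    rw [hQ, Polynomial.eval_finset_sum]
    simp
  -- every root is real
  have hrootsreal : ∀ w ∈ Q.roots, w.im = 0 := by
    intro w hw
    have hQ0 : Q ≠ 0 := fun h => hne (by rw [← hcoeffd, h, Polynomial.coeff_zero])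
    have hev : Q.eval w = 0 := (Polynomial.mem_roots hQ0).mp hw
    have hw0 : w ≠ 0 := by
      rintro rfl
      rw [heval 0] at hev
      rw [Finset.sum_eq_single 0 (by intro b _ hb; simp [hb]) (by simp)] at hev
      simp at hev
      exact (hpos d le_rfl).ne' hev
    -- w⁻¹ is a root of the original polynomial
    have hswap : (∑ i ∈ Finset.range (d + 1), ((H i : ℝ) : ℂ) * (w⁻¹) ^ i) = 0 := by
      have hrefl : ∑ i ∈ Finset.range (d + 1), ((H i : ℝ) : ℂ) * w ^ (d - i)
          = ∑ i ∈ Finset.range (d + 1), ((H (d - i) : ℝ) : ℂ) * w ^ i := by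
        have := Finset.sum_range_reflect (fun i => ((H (d - i) : ℝ) : ℂ) * w ^ i) (d + 1)
        rw [← this]
        apply Finset.sum_congr rfl
        intro i hi
        simp only [Finset.mem_range, Nat.lt_succ_iff] at hi
        have e1 : d + 1 - 1 - i = d - i := by omega
        have e2 : d - (d - i) = i := by omega
        rw [e1, e2]
      have hfac : ∀ i ∈ Finset.range (d + 1),
          ((H i : ℝ) : ℂ) * (w⁻¹) ^ i = (w⁻¹) ^ d * (((H i : ℝ) : ℂ) * w ^ (d - i)) := by
        intro i hi
        simp only [Finset.mem_range, Nat.lt_succ_iff] at hi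
        have : w ^ (d - i) * w ^ i = w ^ d := by
          rw [← pow_add]; congr 1; omega
        rw [inv_pow, inv_pow, ← this]
        field_simp
      rw [Finset.sum_congr rfl hfac, ← Finset.mul_sum, hrefl, ← heval w, hev, mul_zero]
    have him : (w⁻¹).im = 0 := hcon _ hswap
    rw [← inv_inv w, Complex.inv_im, him, neg_zero, zero_div]
  -- the multiset of (negated) real roots
  set V : Multiset ℝ := Q.roots.map (fun w => -w.re) with hV
  have hcardV : Multiset.card V = d := by rw [hV, Multiset.card_map, hroots]
  have hrootsV : Q.roots = (V.map (fun v => -v)).map (Complex.ofRealHom : ℝ →+* ℂ) := by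
    rw [hV, Multiset.map_map, Multiset.map_map]
    conv_lhs => rw [← Multiset.map_id' Q.roots]
    apply Multiset.map_congr rfl
    intro w hw
    simp only [id, Function.comp_apply, neg_neg]
    exact (Complex.ext (by simp) (by simp [hrootsreal w hw])).symm
  -- Vieta for esymm 1 and 2
  have hH0' : ((H 0 : ℝ) : ℂ) = 1 := by rw [hH0]; simp
  have hes : ∀ k, Q.roots.esymm k = (((-1:ℝ) ^ k * V.esymm k : ℝ) : ℂ) := by
    intro k
    rw [hrootsV, myEsymmMap, Multiset.esymm_neg]
    simp
  have hv1 : (d:ℕ) - (d - 1) = 1 := by omega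
  have hv2 : (d:ℕ) - (d - 2) = 2 := by omega
  have h1 := Polynomial.coeff_eq_esymm_roots_of_card (by rw [hdeg]; exact hroots)
    (show d - 1 ≤ Q.natDegree by omega)
  rw [hdeg, hv1, hlead, hH0', hes 1, hcoeff (d - 1), if_pos (by omega), hv1] at h1
  have h2 := Polynomial.coeff_eq_esymm_roots_of_card (by rw [hdeg]; exact hroots)
    (show d - 2 ≤ Q.natDegree by omega)
  rw [hdeg, hv2, hlead, hH0', hes 2, hcoeff (d - 2), if_pos (by omega), hv2] at h2
  -- extract real equations
  have hsum : V.sum = (n : ℝ) - 1 := by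
    have : ((H 1 : ℝ) : ℂ) = ((V.sum : ℝ) : ℂ) := by
      rw [h1]; push_cast; rw [myEsymmOne]; ring
    have := Complex.ofReal_injective this
    rw [hH1] at this; linarith [this]
  have he2 : V.esymm 2 = H 2 := by
    have : ((H 2 : ℝ) : ℂ) = ((V.esymm 2 : ℝ) : ℂ) := by
      rw [h2]; push_cast; ring
    exact (Complex.ofReal_injective this).symm
  -- Newton's inequality via Cauchy–Schwarz
  have hcs := myCS V
  have hid := myIdentity V
  rw [hcardV] at hcs
  rw [hsum] at hcs hid
  rw [he2] at hid
  -- final arithmetic contradiction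
  have hM : (m : ℝ) = (n : ℝ) + (d : ℝ) - 1 := by
    have : ((m : ℝ) + 1) = (n : ℝ) + (d : ℝ) := by exact_mod_cast congrArg (Nat.cast : ℕ → ℝ) hmnd
    linarith
  have hchm : (m.choose 2 : ℝ) = (m : ℝ) * ((m : ℝ) - 1) / 2 := Nat.cast_choose_two (K := ℝ) m
  have hchd : (d.choose 2 : ℝ) = (d : ℝ) * ((d : ℝ) - 1) / 2 := Nat.cast_choose_two (K := ℝ) d
  rw [hchm, hchd, hM] at hH2
  rw [hM] at hineq
  have hD : (2:ℝ) ≤ (d:ℝ) := by exact_mod_cast hd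
  have key : 2 * (d:ℝ) * H 2 ≤ ((d:ℝ) - 1) * ((n:ℝ) - 1) ^ 2 := by nlinarith [hcs, hid]
  nlinarith [key, hineq, hH2, hD]
end
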